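/- Every Ising Gibbs measure is stationary for the nonlinear block dynamics: for any symmetric interaction matrix J and any external field vector h, the Gibbs measure μ_{J,h} satisfies μ_{J,h} ∘ μ_{J,h} = μ_{J,h}, where ∘ is the quadratic block-exchange operation with kernel Q_J. -/
import Mathlib


/-- The ±1 spin value of a Boolean. -/
def spin (b : Bool) : ℝ := if b then 1 else -1

/-- Unnormalized Ising weight with interaction J and external fields h. -/
noncomputable def isingWeight {n : ℕ} (J : Fin n → Fin n → ℝ) (h : Fin n → ℝ)
    (σ : Fin n → Bool) : ℝ :=
  Real.exp ((1 / 2) * ∑ x, ∑ y, J x y * spin (σ x) * spin (σ y)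
      + ∑ x, h x * spin (σ x))

/-- Ising Gibbs measure with interaction J and external fields h. -/
noncomputable def isingGibbs {n : ℕ} (J : Fin n → Fin n → ℝ) (h : Fin n → ℝ)
    (σ : Fin n → Bool) : ℝ :=
  isingWeight J h σ / ∑ τ, isingWeight J h τ

/-- The configuration equal to σ on Λ and to σ' off Λ. -/
def mix {n : ℕ} (Λ : Finset (Fin n)) (σ σ' : Fin n → Bool) : Fin n → Bool :=
  fun x => if x ∈ Λ then σ x else σ' x

/-- The nonlinear block dynamics kernel Q_J, defined from the zero-field Gibbs
measure: (τ,τ') = (σ'_Λσ_{Λᶜ}, σ_Λσ'_{Λᶜ}) with Λ chosen with probability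
proportional to μ_J(σ'_Λσ_{Λᶜ})μ_J(σ_Λσ'_{Λᶜ}). -/
noncomputable def blockKernel {n : ℕ} (J : Fin n → Fin n → ℝ)
    (σ σ' τ τ' : Fin n → Bool) : ℝ :=
  (∑ Λ : Finset (Fin n),
      isingGibbs J (fun _ => 0) (mix Λ σ' σ) * isingGibbs J (fun _ => 0) (mix Λ σ σ')
        * (if τ = mix Λ σ' σ then 1 else 0) * (if τ' = mix Λ σ σ' then 1 else 0))
    / (∑ A : Finset (Fin n),
        isingGibbs J (fun _ => 0) (mix A σ' σ) * isingGibbs J (fun _ => 0) (mix A σ σ'))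

noncomputable def Zpair {n : ℕ} (J : Fin n → Fin n → ℝ) (σ σ' : Fin n → Bool) : ℝ :=
  ∑ A : Finset (Fin n),
    isingGibbs J (fun _ => 0) (mix A σ' σ) * isingGibbs J (fun _ => 0) (mix A σ σ')

lemma isingWeight_pos {n : ℕ} (J : Fin n → Fin n → ℝ) (h : Fin n → ℝ) (σ : Fin n → Bool) :
    0 < isingWeight J h σ := Real.exp_pos _

lemma sum_isingWeight_pos {n : ℕ} (J : Fin n → Fin n → ℝ) (h : Fin n → ℝ) :
    0 < ∑ τ : Fin n → Bool, isingWeight J h τ :=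
  Finset.sum_pos (fun τ _ => isingWeight_pos J h τ) Finset.univ_nonempty

lemma isingGibbs_pos {n : ℕ} (J : Fin n → Fin n → ℝ) (h : Fin n → ℝ) (σ : Fin n → Bool) :
    0 < isingGibbs J h σ := div_pos (isingWeight_pos J h σ) (sum_isingWeight_pos J h)

lemma sum_isingGibbs {n : ℕ} (J : Fin n → Fin n → ℝ) (h : Fin n → ℝ) :
    ∑ σ : Fin n → Bool, isingGibbs J h σ = 1 := by
  simp only [isingGibbs, ← Finset.sum_div]
  exact div_self (sum_isingWeight_pos J h).ne'

lemma Zpair_pos {n : ℕ} (J : Fin n → Fin n → ℝ) (σ σ' : Fin n → Bool) :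
    0 < Zpair J σ σ' :=
  Finset.sum_pos (fun A _ => mul_pos (isingGibbs_pos _ _ _) (isingGibbs_pos _ _ _))
    Finset.univ_nonempty

lemma mix_mix {n : ℕ} (Λ A : Finset (Fin n)) (σ σ' : Fin n → Bool) :
    mix A (mix Λ σ σ') (mix Λ σ' σ) = mix (symmDiff A Λ) σ' σ := by
  funext x
  by_cases hA : x ∈ A <;> by_cases hL : x ∈ Λ <;>
    simp [mix, Finset.mem_symmDiff, hA, hL]

lemma mix_mix_self {n : ℕ} (Λ : Finset (Fin n)) (σ σ' : Fin n → Bool) :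
    mix Λ (mix Λ σ σ') (mix Λ σ' σ) = σ := by
  funext x
  by_cases hx : x ∈ Λ <;> simp [mix, hx]

lemma weight_swap {n : ℕ} (J : Fin n → Fin n → ℝ) (h : Fin n → ℝ) (Λ : Finset (Fin n))
    (σ σ' : Fin n → Bool) :
    isingWeight J h σ * isingWeight J h σ' *
      (isingWeight J (fun _ => 0) (mix Λ σ' σ) * isingWeight J (fun _ => 0) (mix Λ σ σ'))
  = isingWeight J h (mix Λ σ' σ) * isingWeight J h (mix Λ σ σ') *
      (isingWeight J (fun _ => 0) σ * isingWeight J (fun _ => 0) σ') := by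
  have hfield : (∑ x, h x * spin (σ x)) + (∑ x, h x * spin (σ' x))
      = (∑ x, h x * spin (mix Λ σ' σ x)) + (∑ x, h x * spin (mix Λ σ σ' x)) := by
    rw [← Finset.sum_add_distrib, ← Finset.sum_add_distrib]
    refine Finset.sum_congr rfl fun x _ => ?_
    by_cases hx : x ∈ Λ <;> simp [mix, hx] <;> ring
  simp only [isingWeight, ← Real.exp_add, zero_mul, Finset.sum_const_zero, add_zero]
  congr 1
  linarith [hfield]

lemma gibbs_swap {n : ℕ} (J : Fin n → Fin n → ℝ) (h : Fin n → ℝ) (Λ : Finset (Fin n))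
    (σ σ' : Fin n → Bool) :
    isingGibbs J h σ * isingGibbs J h σ' *
      (isingGibbs J (fun _ => 0) (mix Λ σ' σ) * isingGibbs J (fun _ => 0) (mix Λ σ σ'))
  = isingGibbs J h (mix Λ σ' σ) * isingGibbs J h (mix Λ σ σ') *
      (isingGibbs J (fun _ => 0) σ * isingGibbs J (fun _ => 0) σ') := by
  simp only [isingGibbs, div_mul_div_comm]
  rw [weight_swap]

lemma Zpair_swap {n : ℕ} (J : Fin n → Fin n → ℝ) (Λ : Finset (Fin n)) (σ σ' : Fin n → Bool) :
    Zpair J (mix Λ σ' σ) (mix Λ σ σ') = Zpair J σ σ' := by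
  unfold Zpair
  have hb : Function.Bijective (fun A : Finset (Fin n) => symmDiff A Λ) :=
    Function.Involutive.bijective fun A => by rw [symmDiff_assoc, symmDiff_self, symmDiff_bot]
  refine Fintype.sum_bijective _ hb _ _ fun A => ?_
  rw [mix_mix Λ A σ σ', mix_mix Λ A σ' σ]

/-- every Ising Gibbs measure μ_{J,h} is stationary for the
nonlinear block dynamics: μ_{J,h} ∘ μ_{J,h} = μ_{J,h}. -/
theorem gibbs_stationary {n : ℕ} (J : Fin n → Fin n → ℝ)
    (hJsym : ∀ x y, J x y = J y x) (h : Fin n → ℝ) :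
    ∀ τ : Fin n → Bool,
      ∑ σ, ∑ σ', ∑ τ', isingGibbs J h σ * isingGibbs J h σ' * blockKernel J σ σ' τ τ'
        = isingGibbs J h τ := by
  intro τ
  have hZ : ∀ σ σ' : Fin n → Bool, Zpair J σ σ' ≠ 0 := fun σ σ' => (Zpair_pos J σ σ').ne'
  have stepA : ∀ σ σ' : Fin n → Bool,
      (∑ τ' : Fin n → Bool, isingGibbs J h σ * isingGibbs J h σ' * blockKernel J σ σ' τ τ')
    = ∑ Λ : Finset (Fin n),
        isingGibbs J h σ * isingGibbs J h σ' *
          (isingGibbs J (fun _ => 0) (mix Λ σ' σ) * isingGibbs J (fun _ => 0) (mix Λ σ σ')) *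
          (if τ = mix Λ σ' σ then 1 else 0) / Zpair J σ σ' := by
    intro σ σ'
    have hbk : ∀ τ' : Fin n → Bool, blockKernel J σ σ' τ τ'
        = (∑ Λ : Finset (Fin n),
            isingGibbs J (fun _ => 0) (mix Λ σ' σ) * isingGibbs J (fun _ => 0) (mix Λ σ σ')
              * (if τ = mix Λ σ' σ then 1 else 0) * (if τ' = mix Λ σ σ' then 1 else 0))
          / Zpair J σ σ' := fun _ => rfl
    simp only [hbk, Finset.mul_sum, Finset.sum_div, mul_div_assoc]
    rw [Finset.sum_comm]
    refine Finset.sum_congr rfl fun Λ _ => ?_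
    rw [Finset.sum_eq_single (mix Λ σ σ')]
    · simp only [if_pos rfl, if_true, mul_one]
      ring
    · intro b _ hb
      simp [hb]
    · simp
  have stepB : ∀ Λ : Finset (Fin n),
      (∑ σ : Fin n → Bool, ∑ σ' : Fin n → Bool,
        isingGibbs J h σ * isingGibbs J h σ' *
          (isingGibbs J (fun _ => 0) (mix Λ σ' σ) * isingGibbs J (fun _ => 0) (mix Λ σ σ')) *
          (if τ = mix Λ σ' σ then 1 else 0) / Zpair J σ σ')
    = ∑ σ : Fin n → Bool, ∑ σ' : Fin n → Bool,
        isingGibbs J h σ * isingGibbs J h σ' *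
          (isingGibbs J (fun _ => 0) (mix Λ σ' σ) * isingGibbs J (fun _ => 0) (mix Λ σ σ')) *
          (if τ = σ then 1 else 0) / Zpair J σ σ' := by
    intro Λ
    have e1 : (∑ σ : Fin n → Bool, ∑ σ' : Fin n → Bool,
        isingGibbs J h σ * isingGibbs J h σ' *
          (isingGibbs J (fun _ => 0) (mix Λ σ' σ) * isingGibbs J (fun _ => 0) (mix Λ σ σ')) *
          (if τ = mix Λ σ' σ then 1 else 0) / Zpair J σ σ')
      = ∑ p : (Fin n → Bool) × (Fin n → Bool),
          isingGibbs J h p.1 * isingGibbs J h p.2 *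
            (isingGibbs J (fun _ => 0) (mix Λ p.2 p.1) * isingGibbs J (fun _ => 0) (mix Λ p.1 p.2)) *
            (if τ = mix Λ p.2 p.1 then 1 else 0) / Zpair J p.1 p.2 :=
      (Fintype.sum_prod_type' (fun σ σ' : Fin n → Bool =>
        isingGibbs J h σ * isingGibbs J h σ' *
          (isingGibbs J (fun _ => 0) (mix Λ σ' σ) * isingGibbs J (fun _ => 0) (mix Λ σ σ')) *
          (if τ = mix Λ σ' σ then 1 else 0) / Zpair J σ σ')).symm
    have e2 : (∑ σ : Fin n → Bool, ∑ σ' : Fin n → Bool,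
        isingGibbs J h σ * isingGibbs J h σ' *
          (isingGibbs J (fun _ => 0) (mix Λ σ' σ) * isingGibbs J (fun _ => 0) (mix Λ σ σ')) *
          (if τ = σ then 1 else 0) / Zpair J σ σ')
      = ∑ p : (Fin n → Bool) × (Fin n → Bool),
          isingGibbs J h p.1 * isingGibbs J h p.2 *
            (isingGibbs J (fun _ => 0) (mix Λ p.2 p.1) * isingGibbs J (fun _ => 0) (mix Λ p.1 p.2)) *
            (if τ = p.1 then 1 else 0) / Zpair J p.1 p.2 :=
      (Fintype.sum_prod_type' (fun σ σ' : Fin n → Bool =>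
        isingGibbs J h σ * isingGibbs J h σ' *
          (isingGibbs J (fun _ => 0) (mix Λ σ' σ) * isingGibbs J (fun _ => 0) (mix Λ σ σ')) *
          (if τ = σ then 1 else 0) / Zpair J σ σ')).symm
    rw [e1, e2]
    refine (Fintype.sum_bijective
      (fun p : (Fin n → Bool) × (Fin n → Bool) => (mix Λ p.2 p.1, mix Λ p.1 p.2))
      (Function.Involutive.bijective fun p =>
        Prod.ext (mix_mix_self Λ p.1 p.2) (mix_mix_self Λ p.2 p.1)) _ _ ?_).symm
    rintro ⟨a, b⟩
    simp only [mix_mix_self, Zpair_swap]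
    rw [gibbs_swap]
  calc
    (∑ σ, ∑ σ', ∑ τ', isingGibbs J h σ * isingGibbs J h σ' * blockKernel J σ σ' τ τ')
      = ∑ σ : Fin n → Bool, ∑ σ' : Fin n → Bool, ∑ Λ : Finset (Fin n),
          isingGibbs J h σ * isingGibbs J h σ' *
            (isingGibbs J (fun _ => 0) (mix Λ σ' σ) * isingGibbs J (fun _ => 0) (mix Λ σ σ')) *
            (if τ = mix Λ σ' σ then 1 else 0) / Zpair J σ σ' :=
        Finset.sum_congr rfl fun σ _ => Finset.sum_congr rfl fun σ' _ => stepA σ σ'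
    _ = ∑ σ : Fin n → Bool, ∑ Λ : Finset (Fin n), ∑ σ' : Fin n → Bool,
          isingGibbs J h σ * isingGibbs J h σ' *
            (isingGibbs J (fun _ => 0) (mix Λ σ' σ) * isingGibbs J (fun _ => 0) (mix Λ σ σ')) *
            (if τ = mix Λ σ' σ then 1 else 0) / Zpair J σ σ' :=
        Finset.sum_congr rfl fun σ _ => Finset.sum_comm
    _ = ∑ Λ : Finset (Fin n), ∑ σ : Fin n → Bool, ∑ σ' : Fin n → Bool,
          isingGibbs J h σ * isingGibbs J h σ' *
            (isingGibbs J (fun _ => 0) (mix Λ σ' σ) * isingGibbs J (fun _ => 0) (mix Λ σ σ')) *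
            (if τ = mix Λ σ' σ then 1 else 0) / Zpair J σ σ' :=
        Finset.sum_comm
    _ = ∑ Λ : Finset (Fin n), ∑ σ : Fin n → Bool, ∑ σ' : Fin n → Bool,
          isingGibbs J h σ * isingGibbs J h σ' *
            (isingGibbs J (fun _ => 0) (mix Λ σ' σ) * isingGibbs J (fun _ => 0) (mix Λ σ σ')) *
            (if τ = σ then 1 else 0) / Zpair J σ σ' :=
        Finset.sum_congr rfl fun Λ _ => stepB Λ
    _ = ∑ Λ : Finset (Fin n), ∑ σ' : Fin n → Bool,
          isingGibbs J h τ * isingGibbs J h σ' *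
            (isingGibbs J (fun _ => 0) (mix Λ σ' τ) * isingGibbs J (fun _ => 0) (mix Λ τ σ'))
            / Zpair J τ σ' := by
        refine Finset.sum_congr rfl fun Λ _ => ?_
        rw [Finset.sum_eq_single τ]
        · simp only [if_pos rfl, if_true, mul_one]
        · intro b _ hb
          simp [Ne.symm hb]
        · simp
    _ = ∑ σ' : Fin n → Bool, ∑ Λ : Finset (Fin n),
          isingGibbs J h τ * isingGibbs J h σ' *
            (isingGibbs J (fun _ => 0) (mix Λ σ' τ) * isingGibbs J (fun _ => 0) (mix Λ τ σ'))
            / Zpair J τ σ' := Finset.sum_comm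
    _ = ∑ σ' : Fin n → Bool, isingGibbs J h τ * isingGibbs J h σ' := by
        refine Finset.sum_congr rfl fun σ' _ => ?_
        have hzz : (∑ Λ : Finset (Fin n),
            isingGibbs J (fun _ => 0) (mix Λ σ' τ) * isingGibbs J (fun _ => 0) (mix Λ τ σ'))
            = Zpair J τ σ' := rfl
        rw [← Finset.sum_div, ← Finset.mul_sum, hzz, mul_div_assoc, div_self (hZ τ σ'), mul_one]
    _ = isingGibbs J h τ := by
        rw [← Finset.mul_sum, sum_isingGibbs, mul_one]
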